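/- There exists a continuous bilinear form A : ℓ² × ℓ² → ℝ that does not attain its norm; that is, there is no pair (x, y) with ‖x‖ ≤ 1 and ‖y‖ ≤ 1 such that |A(x, y)| = ‖A‖. -/

import Mathlib

open Filter Topology
open scoped ENNReal
set_option maxHeartbeats 1000000

noncomputable section Aux16

/-- The coefficients of the diagonal operator. -/
def c16 (n : ℕ) : ℝ := 1 - (1/2 : ℝ) ^ n

lemma c16_nonneg (n : ℕ) : 0 ≤ c16 n :=
  sub_nonneg.mpr (pow_le_one₀ (by norm_num) (by norm_num))

lemma c16_lt_one (n : ℕ) : c16 n < 1 :=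
  sub_lt_self 1 (by positivity)

lemma c16_abs_le_one (n : ℕ) : |c16 n| ≤ 1 := by
  rw [abs_of_nonneg (c16_nonneg n)]; exact (c16_lt_one n).le

lemma c16_tendsto : Tendsto c16 atTop (𝓝 1) := by
  have h : Tendsto (fun n : ℕ => (1/2 : ℝ) ^ n) atTop (𝓝 0) :=
    tendsto_pow_atTop_nhds_zero_of_lt_one (by norm_num) (by norm_num)
  show Tendsto (fun n : ℕ => 1 - (1/2 : ℝ) ^ n) atTop (𝓝 1)
  simpa only [sub_zero] using (tendsto_const_nhds (x := (1:ℝ))).sub h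

lemma hp16 : 0 < (2 : ℝ≥0∞).toReal := by norm_num

lemma memT16 (x : lp (fun _ : ℕ => ℝ) 2) : Memℓp (fun n => c16 n * x n) 2 := by
  rw [memℓp_gen_iff hp16]
  have hx := (lp.memℓp x).summable hp16
  refine hx.of_nonneg_of_le (fun n => Real.rpow_nonneg (norm_nonneg _) _) (fun n => ?_)
  refine Real.rpow_le_rpow (norm_nonneg _) ?_ hp16.le
  calc ‖c16 n * x n‖ = |c16 n| * ‖x n‖ := by rw [norm_mul]; rfl
    _ ≤ 1 * ‖x n‖ := by
        exact mul_le_mul_of_nonneg_right (c16_abs_le_one n) (norm_nonneg _)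
    _ = ‖x n‖ := one_mul _

/-- The diagonal operator as a linear map. -/
def Tl16 : lp (fun _ : ℕ => ℝ) 2 →ₗ[ℝ] lp (fun _ : ℕ => ℝ) 2 where
  toFun x := ⟨fun n => c16 n * x n, memT16 x⟩
  map_add' x y := by
    apply lp.ext; funext n
    show c16 n * (x + y) n = _
    rw [lp.coeFn_add]
    show c16 n * (x n + y n) = (⟨fun n => c16 n * x n, memT16 x⟩ +
      ⟨fun n => c16 n * y n, memT16 y⟩ : lp (fun _ : ℕ => ℝ) 2) n
    rw [lp.coeFn_add]
    show _ = c16 n * x n + c16 n * y n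
    ring
  map_smul' r x := by
    apply lp.ext; funext n
    show c16 n * (r • x) n = ((r • (⟨fun n => c16 n * x n, memT16 x⟩ :
      lp (fun _ : ℕ => ℝ) 2)) : lp (fun _ : ℕ => ℝ) 2) n
    rw [lp.coeFn_smul, lp.coeFn_smul]
    show c16 n * (r * x n) = r * (c16 n * x n)
    ring

lemma Tl16_apply (x : lp (fun _ : ℕ => ℝ) 2) (n : ℕ) : Tl16 x n = c16 n * x n := rfl

lemma Tl16_norm (x : lp (fun _ : ℕ => ℝ) 2) : ‖Tl16 x‖ ≤ ‖x‖ := by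
  refine lp.norm_le_of_tsum_le hp16 (norm_nonneg x) ?_
  rw [lp.norm_rpow_eq_tsum hp16 x]
  refine Summable.tsum_le_tsum (fun n => ?_) ?_ ?_
  · refine Real.rpow_le_rpow (norm_nonneg _) ?_ hp16.le
    rw [Tl16_apply]
    calc ‖c16 n * x n‖ = |c16 n| * ‖x n‖ := by rw [norm_mul]; rfl
      _ ≤ 1 * ‖x n‖ := mul_le_mul_of_nonneg_right (c16_abs_le_one n) (norm_nonneg _)
      _ = ‖x n‖ := one_mul _
  · exact (lp.memℓp (Tl16 x)).summable hp16
  · exact (lp.memℓp x).summable hp16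

/-- The diagonal operator as a continuous linear map. -/
def T16 : lp (fun _ : ℕ => ℝ) 2 →L[ℝ] lp (fun _ : ℕ => ℝ) 2 :=
  Tl16.mkContinuous 1 (fun x => by simpa using Tl16_norm x)

lemma T16_apply (x : lp (fun _ : ℕ => ℝ) 2) (n : ℕ) : T16 x n = c16 n * x n := rfl

/-- The bilinear form. -/
def A16 : lp (fun _ : ℕ => ℝ) 2 →L[ℝ] lp (fun _ : ℕ => ℝ) 2 →L[ℝ] ℝ :=
  (innerSL ℝ).comp T16

lemma A16_apply (x y : lp (fun _ : ℕ => ℝ) 2) :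
    A16 x y = ∑' n, c16 n * x n * y n := by
  show (inner ℝ (T16 x) y : ℝ) = _
  rw [lp.inner_eq_tsum]
  refine tsum_congr (fun n => ?_)
  rw [RCLike.inner_apply, T16_apply]
  simp [mul_assoc]
  ring

lemma A16_norm_le : ‖A16‖ ≤ 1 := by
  refine ContinuousLinearMap.opNorm_le_bound _ zero_le_one (fun x => ?_)
  refine ContinuousLinearMap.opNorm_le_bound _ (by positivity) (fun y => ?_)
  calc ‖A16 x y‖ = ‖(inner ℝ (T16 x) y : ℝ)‖ := rfl
    _ ≤ ‖T16 x‖ * ‖y‖ := norm_inner_le_norm _ _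
    _ ≤ ‖x‖ * ‖y‖ := mul_le_mul_of_nonneg_right (Tl16_norm x) (norm_nonneg _)
    _ = 1 * ‖x‖ * ‖y‖ := by ring

lemma A16_single (n : ℕ) :
    A16 (lp.single 2 n (1:ℝ)) (lp.single 2 n (1:ℝ)) = c16 n := by
  show (inner ℝ (T16 (lp.single 2 n (1:ℝ))) (lp.single 2 n (1:ℝ)) : ℝ) = c16 n
  rw [lp.inner_single_right (𝕜 := ℝ) (G := fun _ : ℕ => ℝ) n (1:ℝ)
    (T16 (lp.single 2 n (1:ℝ))), RCLike.inner_apply, T16_apply]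
  simp [lp.single_apply_self]

lemma norm_single16 (n : ℕ) : ‖(lp.single 2 n (1:ℝ) : lp (fun _ : ℕ => ℝ) 2)‖ = 1 := by
  have := lp.norm_single (E := fun _ : ℕ => ℝ) (by norm_num : (0:ℝ≥0∞) < 2) n (1:ℝ)
  exact this.trans norm_one

lemma A16_norm_ge : 1 ≤ ‖A16‖ := by
  refine le_of_tendsto c16_tendsto (Eventually.of_forall (fun n => ?_))
  set e : lp (fun _ : ℕ => ℝ) 2 := lp.single 2 n (1:ℝ) with he
  have h1 : c16 n ≤ |A16 e e| := by
    rw [he, A16_single]; exact le_abs_self _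
  have hne : ‖e‖ = 1 := norm_single16 n
  calc c16 n ≤ |A16 e e| := h1
    _ = ‖A16 e e‖ := (Real.norm_eq_abs _).symm
    _ ≤ ‖A16 e‖ * ‖e‖ := ContinuousLinearMap.le_opNorm _ _
    _ ≤ (‖A16‖ * ‖e‖) * ‖e‖ :=
        mul_le_mul_of_nonneg_right (A16.le_opNorm _) (norm_nonneg _)
    _ = ‖A16‖ := by rw [hne]; ring

lemma A16_norm : ‖A16‖ = 1 := le_antisymm A16_norm_le A16_norm_ge

end Aux16

/-- There exists a continuous bilinear form on `ℓ² × ℓ²` that does not attain its norm. -/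
theorem stmt16 :
    ∃ A : lp (fun _ : ℕ => ℝ) 2 →L[ℝ] lp (fun _ : ℕ => ℝ) 2 →L[ℝ] ℝ,
      ¬ ∃ (x y : lp (fun _ : ℕ => ℝ) 2), ‖x‖ ≤ 1 ∧ ‖y‖ ≤ 1 ∧ |A x y| = ‖A‖ := by
  refine ⟨A16, ?_⟩
  rintro ⟨x, y, hx, hy, habs⟩
  rw [A16_norm] at habs
  -- summability facts
  have hconj : (2 : ℝ≥0∞).toReal.HolderConjugate (2 : ℝ≥0∞).toReal := by
    rw [Real.holderConjugate_iff]; norm_num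
  have hs : Summable fun n => ‖x n‖ * ‖y n‖ := lp.summable_mul hconj x y
  have hs_le : ∑' n, ‖x n‖ * ‖y n‖ ≤ ‖x‖ * ‖y‖ := lp.tsum_mul_le_mul_norm' hconj x y
  have hcs : Summable fun n => c16 n * (‖x n‖ * ‖y n‖) := by
    refine hs.of_nonneg_of_le (fun n => mul_nonneg (c16_nonneg n) (by positivity)) (fun n => ?_)
    exact mul_le_of_le_one_left (by positivity) (c16_lt_one n).le
  have hterm : ∀ n, ‖c16 n * x n * y n‖ = c16 n * (‖x n‖ * ‖y n‖) := by
    intro n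
    rw [norm_mul, norm_mul]
    rw [show ‖c16 n‖ = c16 n from abs_of_nonneg (c16_nonneg n)]
    ring
  have hsum : Summable fun n => c16 n * x n * y n := by
    refine Summable.of_norm ?_
    simpa only [hterm] using hcs
  -- case split: all products zero, or some nonzero
  by_cases hz : ∀ n, x n * y n = 0
  · rw [A16_apply] at habs
    have hz' : ∀ n, c16 n * x n * y n = 0 := fun n => by rw [mul_assoc, hz n, mul_zero]
    rw [show (∑' n, c16 n * x n * y n) = 0 by rw [tsum_congr hz', tsum_zero]] at habs
    simp at habs
  · push_neg at hz
    obtain ⟨k, hk⟩ := hz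
    have hklt : c16 k * (‖x k‖ * ‖y k‖) < ‖x k‖ * ‖y k‖ := by
      have hpos : 0 < ‖x k‖ * ‖y k‖ := by
        have hxk : x k ≠ 0 := fun h => hk (by simp [h])
        have hyk : y k ≠ 0 := fun h => hk (by simp [h])
        exact mul_pos (norm_pos_iff.mpr hxk) (norm_pos_iff.mpr hyk)
      nlinarith [c16_lt_one k, c16_nonneg k]
    have hlt : ∑' n, c16 n * (‖x n‖ * ‖y n‖) < ∑' n, ‖x n‖ * ‖y n‖ :=
      Summable.tsum_lt_tsum (fun n => mul_le_of_le_one_left (by positivity) (c16_lt_one n).le)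
        hklt hcs hs
    have h1 : |A16 x y| ≤ ∑' n, c16 n * (‖x n‖ * ‖y n‖) := by
      rw [A16_apply, ← Real.norm_eq_abs]
      have hsum2 : Summable fun n => ‖c16 n * x n * y n‖ := by
        simpa only [hterm] using hcs
      calc ‖∑' n, c16 n * x n * y n‖ ≤ ∑' n, ‖c16 n * x n * y n‖ :=
            norm_tsum_le_tsum_norm hsum2
        _ = ∑' n, c16 n * (‖x n‖ * ‖y n‖) := by
            exact tsum_congr hterm
    have : (1:ℝ) < 1 := by
      calc (1:ℝ) = |A16 x y| := habs.symm
        _ ≤ ∑' n, c16 n * (‖x n‖ * ‖y n‖) := h1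
        _ < ∑' n, ‖x n‖ * ‖y n‖ := hlt
        _ ≤ ‖x‖ * ‖y‖ := hs_le
        _ ≤ 1 := by nlinarith [norm_nonneg x, norm_nonneg y]
    exact absurd this (lt_irrefl 1)
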